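/- For positive integers p, q, n, i, j, k with t = ⌊(n−2)/p⌋, N = n + q·t, i = p(j−1) + k, 1 ≤ k ≤ p, 1 ≤ j ≤ t, and n ≥ i + 2, it holds that N − (i + 1) > q·(j − 1) + q·⌊k/p⌋. -/
import Mathlib

theorem stmt_3 (p q n i j k t N : ℕ) (hp : 0 < p) (hq : 0 < q)
    (ht : t = (n - 2) / p) (hN : N = n + q * t)
    (hi : i = p * (j - 1) + k) (hk1 : 1 ≤ k) (hkp : k ≤ p)
    (hj1 : 1 ≤ j) (hjt : j ≤ t) (hn : i + 2 ≤ n) :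
    N - (i + 1) > q * (j - 1) + q * (k / p) := by
  have hd : k / p ≤ 1 := by
    have := Nat.div_le_div_right (c := p) hkp
    simpa [Nat.div_self hp] using this
  have h2 : q * (j - 1) + q * (k / p) ≤ q * t := by
    calc q * (j - 1) + q * (k / p) ≤ q * (j - 1) + q * 1 := by gcongr
      _ = q * ((j - 1) + 1) := by ring
      _ = q * j := by rw [Nat.sub_add_cancel hj1]
      _ ≤ q * t := Nat.mul_le_mul_left q hjt
  omega
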